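/- Let N be the category with a single object x whose morphisms are φ^k for k ≥ 0, with composition φ^i ∘ φ^j = φ^{i+j} (i.e. the one-object category of the monoid (ℕ, +, 0)). Then every future equivalence (Γ, K, η, ν) from N to itself is of the form (Id_N, Id_N, φ^ℓ, φ^ℓ) for some ℓ ≥ 0; that is, Γ(φ^k) = φ^k and K(φ^k) = φ^k for all k ≥ 0, and there exists ℓ ≥ 0 with η_x = φ^ℓ = ν_x. -/

import Mathlib

open CategoryTheory

/-- The one-object category of the additive monoid `(ℕ, +, 0)`: a single
object `x` with morphisms `φ^k` for `k ≥ 0` (a morphism is its exponent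
`k : ℕ`), composing by addition of exponents. -/
def NCat : Type := Unit

instance : CategoryStruct NCat where
  Hom _ _ := ℕ
  id _ := Nat.zero
  comp f g := Nat.add f g

instance : Category NCat where
  id_comp f := Nat.zero_add f
  comp_id f := Nat.add_zero f
  assoc f g h := Nat.add_assoc f g h

private def homOf (X Y : NCat) (k : ℕ) : X ⟶ Y := k
private def natOf {X Y : NCat} (f : X ⟶ Y) : ℕ := f

private lemma comp_eq' {X Y Z : NCat} (f : X ⟶ Y) (g : Y ⟶ Z) :
    natOf (f ≫ g) = natOf f + natOf g := rfl

private lemma NCat_map_mul (F : NCat ⥤ NCat) (X : NCat) (k : ℕ) :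
    natOf (F.map (homOf X X k)) = natOf (F.map (homOf X X 1)) * k := by
  induction k with
  | zero =>
    have : F.map (homOf X X 0) = F.map (𝟙 X) := rfl
    rw [this, F.map_id]
    show (0:ℕ) = _ * 0
    ring
  | succ n ih =>
    have : F.map (homOf X X (n + 1))
        = F.map (homOf X X n ≫ homOf X X 1) := rfl
    rw [this, F.map_comp, comp_eq', ih]
    ring

/-- Every future equivalence `(Γ, K, η, ν)` from `N` to itself is of the form
`(Id_N, Id_N, φ^ℓ, φ^ℓ)` for some `ℓ ≥ 0`: `Γ` and `K` are the identity on
morphisms (`Γ(φ^k) = φ^k = K(φ^k)`), and there exists `ℓ` with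
`η_x = φ^ℓ = ν_x`. -/
theorem futureEquiv_NCat (Γ K : NCat ⥤ NCat)
    (η : 𝟭 NCat ⟶ Γ ⋙ K) (ν : 𝟭 NCat ⟶ K ⋙ Γ)
    (hcoh1 : ∀ X : NCat, Γ.map (η.app X) = ν.app (Γ.obj X))
    (hcoh2 : ∀ X : NCat, K.map (ν.app X) = η.app (K.obj X)) :
    (∀ (X Y : NCat) (k : X ⟶ Y), Γ.map k = k ∧ K.map k = k) ∧
    ∃ ℓ : ℕ, ∀ X : NCat, η.app X = ℓ ∧ ν.app X = ℓ := by
  have x0 : NCat := show Unit from ()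
  -- naturality of η : K ∘ Γ is the identity on exponents
  have hKΓ : ∀ k : ℕ, natOf (K.map (Γ.map (homOf x0 x0 k))) = k := by
    intro k
    have h := congrArg natOf (η.naturality (homOf x0 x0 k))
    rw [comp_eq', comp_eq'] at h
    have h1 : natOf ((𝟭 NCat).map (homOf x0 x0 k)) = k := rfl
    have h2 : natOf ((Γ ⋙ K).map (homOf x0 x0 k))
        = natOf (K.map (Γ.map (homOf x0 x0 k))) := rfl
    omega
  have hνΓK : ∀ k : ℕ, natOf (Γ.map (K.map (homOf x0 x0 k))) = k := by
    intro k
    have h := congrArg natOf (ν.naturality (homOf x0 x0 k))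
    rw [comp_eq', comp_eq'] at h
    have h1 : natOf ((𝟭 NCat).map (homOf x0 x0 k)) = k := rfl
    have h2 : natOf ((K ⋙ Γ).map (homOf x0 x0 k))
        = natOf (Γ.map (K.map (homOf x0 x0 k))) := rfl
    omega
  set a : ℕ := natOf (Γ.map (homOf x0 x0 1)) with ha
  set b : ℕ := natOf (K.map (homOf x0 x0 1)) with hb
  have key : b * a = 1 := by
    have h := hKΓ 1
    have h2 : Γ.map (homOf x0 x0 1) = homOf x0 x0 a := rfl
    rw [h2] at h
    exact (NCat_map_mul K x0 a).symm.trans h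
  have ha1 : a = 1 := (Nat.eq_one_of_mul_eq_one_left key)
  have hb1 : b = 1 := (Nat.eq_one_of_mul_eq_one_right key)
  have hΓ : ∀ (X Y : NCat) (k : X ⟶ Y), Γ.map k = k := by
    intro X Y k
    have : natOf (Γ.map (homOf x0 x0 (natOf k))) = a * natOf k :=
      by rw [NCat_map_mul Γ x0 (natOf k)]
    rw [ha1, one_mul] at this
    exact this
  have hK : ∀ (X Y : NCat) (k : X ⟶ Y), K.map k = k := by
    intro X Y k
    have : natOf (K.map (homOf x0 x0 (natOf k))) = b * natOf k :=
      by rw [NCat_map_mul K x0 (natOf k)]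
    rw [hb1, one_mul] at this
    exact this
  refine ⟨fun X Y k => ⟨hΓ X Y k, hK X Y k⟩, natOf (η.app x0), fun X => ⟨rfl, ?_⟩⟩
  have h := hcoh1 x0
  rw [hΓ x0 _ (η.app x0)] at h
  exact h.symm
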